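/- Solutions of the unified vakonomic Herglotz field system with nowhere-vanishing multiplier satisfy the Herglotz field equations: let m, n ≥ 1, let L : ℝⁿ × (ℝⁿ)ᵐ × ℝᵐ → ℝ be differentiable with partial derivatives ∂L/∂uᵅ, ∂L/∂vᵅᵢ, ∂L/∂zⁱ, and let u : ℝᵐ → ℝⁿ, z : ℝᵐ → ℝᵐ, μ : ℝᵐ → ℝ and p = (pᵅᵢ) : ℝᵐ → ℝ^{n×m} be differentiable functions satisfying the unified Herglotz field system with μ(x) ≠ 0 for all x. Then for every α the functions x ↦ (∂L/∂vᵅᵢ)(Φ(x)) are differentiable and ∑ᵢ ∂/∂xⁱ[(∂L/∂vᵅᵢ)(Φ(x))] = (∂L/∂uᵅ)(Φ(x)) + ∑ᵢ (∂L/∂zⁱ)(Φ(x))·(∂L/∂vᵅᵢ)(Φ(x)) for all x ∈ ℝᵐ. -/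

import Mathlib

open scoped BigOperators

variable {m n : ℕ}

/-- Partial derivative `∂L/∂uᵅ` of a field Lagrangian `L(u, v, z)`. -/
noncomputable def dLu (L : (Fin n → ℝ) × (Fin n → Fin m → ℝ) × (Fin m → ℝ) → ℝ)
    (P : (Fin n → ℝ) × (Fin n → Fin m → ℝ) × (Fin m → ℝ)) (α : Fin n) : ℝ :=
  fderiv ℝ L P (Pi.single α 1, 0, 0)

/-- Partial derivative `∂L/∂vᵅᵢ` of a field Lagrangian `L(u, v, z)`. -/
noncomputable def dLv (L : (Fin n → ℝ) × (Fin n → Fin m → ℝ) × (Fin m → ℝ) → ℝ)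
    (P : (Fin n → ℝ) × (Fin n → Fin m → ℝ) × (Fin m → ℝ)) (α : Fin n) (i : Fin m) : ℝ :=
  fderiv ℝ L P (0, Pi.single α (Pi.single i 1), 0)

/-- Partial derivative `∂L/∂zⁱ` of a field Lagrangian `L(u, v, z)`. -/
noncomputable def dLz (L : (Fin n → ℝ) × (Fin n → Fin m → ℝ) × (Fin m → ℝ) → ℝ)
    (P : (Fin n → ℝ) × (Fin n → Fin m → ℝ) × (Fin m → ℝ)) (i : Fin m) : ℝ :=
  fderiv ℝ L P (0, 0, Pi.single i 1)

/-- The first jet prolongation `Φ(x) = (u(x), (∂uᵅ/∂xⁱ)(x), z(x))` of the fields. -/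
noncomputable def jetProl (u : (Fin m → ℝ) → (Fin n → ℝ)) (z : (Fin m → ℝ) → (Fin m → ℝ))
    (x : Fin m → ℝ) : (Fin n → ℝ) × (Fin n → Fin m → ℝ) × (Fin m → ℝ) :=
  (u x, fun α i => fderiv ℝ u x (Pi.single i 1) α, z x)

/-- Solutions of the unified vakonomic Herglotz field system with nowhere-vanishing
multiplier satisfy the Herglotz field equations. -/
theorem unifiedHerglotzField_implies_herglotzFieldEqs
    (hm : 1 ≤ m) (hn : 1 ≤ n)
    (L : (Fin n → ℝ) × (Fin n → Fin m → ℝ) × (Fin m → ℝ) → ℝ) (hL : Differentiable ℝ L)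
    (u : (Fin m → ℝ) → (Fin n → ℝ)) (z : (Fin m → ℝ) → (Fin m → ℝ))
    (μ : (Fin m → ℝ) → ℝ) (p : (Fin m → ℝ) → Fin n → Fin m → ℝ)
    (hu : Differentiable ℝ u) (hz : Differentiable ℝ z)
    (hμ : Differentiable ℝ μ) (hp : Differentiable ℝ p)
    -- unified Herglotz field system:
    (hμeq : ∀ x i, fderiv ℝ μ x (Pi.single i 1) = -μ x * dLz L (jetProl u z x) i)
    (hzeq : ∀ x, ∑ i, fderiv ℝ z x (Pi.single i 1) i = L (jetProl u z x))
    (hpeq : ∀ x α, ∑ i, fderiv ℝ p x (Pi.single i 1) α i = μ x * dLu L (jetProl u z x) α)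
    (hleg : ∀ x α i, p x α i = μ x * dLv L (jetProl u z x) α i)
    (hμne : ∀ x, μ x ≠ 0) :
    (∀ α i, Differentiable ℝ (fun x => dLv L (jetProl u z x) α i)) ∧
    ∀ x α, ∑ i, fderiv ℝ (fun y => dLv L (jetProl u z y) α i) x (Pi.single i 1)
        = dLu L (jetProl u z x) α
          + ∑ i, dLz L (jetProl u z x) i * dLv L (jetProl u z x) α i := by

  -- `dLv` along the solution equals `p / μ`
  have hdLv : ∀ x α i, dLv L (jetProl u z x) α i = p x α i * (μ x)⁻¹ := by
    intro x α i
    rw [hleg x α i, mul_comm (μ x), mul_assoc, mul_inv_cancel₀ (hμne x), mul_one]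
  have hfun : ∀ α i, (fun x => dLv L (jetProl u z x) α i) = fun x => p x α i * (μ x)⁻¹ := by
    intro α i; funext x; exact hdLv x α i
  have hpc : ∀ α i, Differentiable ℝ (fun x => p x α i) := by
    intro α i
    exact fun x =>
      ((ContinuousLinearMap.proj (R := ℝ) (φ := fun _ : Fin m => ℝ) i).comp
        (ContinuousLinearMap.proj (R := ℝ) (φ := fun _ : Fin n => Fin m → ℝ) α)).differentiable.comp
        hp |>.differentiableAt
  have hdiff : ∀ α i, Differentiable ℝ (fun x => dLv L (jetProl u z x) α i) := by
    intro α i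
    rw [hfun α i]
    exact (hpc α i).mul (hμ.inv hμne)
  refine ⟨hdiff, ?_⟩
  intro x α
  -- derivative of each term
  have hterm : ∀ i : Fin m, fderiv ℝ (fun y => dLv L (jetProl u z y) α i) x (Pi.single i 1)
      = fderiv ℝ p x (Pi.single i 1) α i * (μ x)⁻¹
        + dLz L (jetProl u z x) i * (p x α i * (μ x)⁻¹) := by
    intro i
    rw [hfun α i]
    set e : (Fin n → Fin m → ℝ) →L[ℝ] ℝ :=
      (ContinuousLinearMap.proj (R := ℝ) (φ := fun _ : Fin m => ℝ) i).comp
        (ContinuousLinearMap.proj (R := ℝ) (φ := fun _ : Fin n => Fin m → ℝ) α)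
    have h1 : HasFDerivAt (fun y => p y α i) (e.comp (fderiv ℝ p x)) x :=
      e.hasFDerivAt.comp x (hp x).hasFDerivAt
    have h2 : HasFDerivAt (fun y => (μ y)⁻¹)
        ((-(ContinuousLinearMap.mulLeftRight ℝ ℝ (μ x)⁻¹ (μ x)⁻¹)).comp (fderiv ℝ μ x)) x :=
      (hasFDerivAt_inv' (hμne x)).comp x (hμ x).hasFDerivAt
    have h3 := (h1.mul h2).fderiv
    rw [show (fun x => p x α i * (μ x)⁻¹) = ((fun y => p y α i) * fun y => (μ y)⁻¹) from rfl, h3]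
    have hμv := hμeq x i
    simp only [ContinuousLinearMap.add_apply, ContinuousLinearMap.smul_apply,
      ContinuousLinearMap.comp_apply, ContinuousLinearMap.neg_apply,
      ContinuousLinearMap.mulLeftRight_apply, ContinuousLinearMap.proj_apply,
      smul_eq_mul, e, hμv]
    have hsq : μ x * (μ x)⁻¹ ^ 2 = (μ x)⁻¹ := by
      rw [sq, ← mul_assoc, mul_inv_cancel₀ (hμne x), one_mul]
    field_simp
    linear_combination
  rw [Finset.sum_congr rfl fun i _ => hterm i, Finset.sum_add_distrib, ← Finset.sum_mul,
    hpeq x α]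
  have : μ x * dLu L (jetProl u z x) α * (μ x)⁻¹ = dLu L (jetProl u z x) α := by
    rw [mul_comm (μ x), mul_assoc, mul_inv_cancel₀ (hμne x), mul_one]
  rw [this]
  congr 1
  exact Finset.sum_congr rfl fun i _ => by rw [hdLv x α i]
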